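/- For integers n ≥ 10 and d = 4, with 0 ≤ k ≤ ⌈(1/(n+1))·C(n+4,n)⌉ and integers u, ε with 0 ≤ ε < n satisfying n·u + ε = k·(n+1) − C(n+3, n), one has k − u − ε ≥ n + 1. -/
import Mathlib

lemma c4_eq (n : ℕ) : 24 * (n+4).choose n = (n+4)*(n+3)*(n+2)*(n+1) := by
  have h1 : (n+4).choose n = (n+4).choose 4 := by
    rw [← Nat.choose_symm (by omega : 4 ≤ n+4)]; congr 1
  have h2 : (n+4).descFactorial 4 = 24 * (n+4).choose 4 := by
    rw [Nat.descFactorial_eq_factorial_mul_choose]; norm_num [Nat.factorial]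
  rw [h1, ← h2]; simp [Nat.descFactorial]; ring

lemma c3_eq (n : ℕ) : 6 * (n+3).choose n = (n+3)*(n+2)*(n+1) := by
  have h1 : (n+3).choose n = (n+3).choose 3 := by
    rw [← Nat.choose_symm (by omega : 3 ≤ n+3)]; congr 1
  have h2 : (n+3).descFactorial 3 = 6 * (n+3).choose 3 := by
    rw [Nat.descFactorial_eq_factorial_mul_choose]; norm_num [Nat.factorial]
  rw [h1, ← h2]; simp [Nat.descFactorial]; ring

/-- Lemma 6.3(iii) of Brambilla–Ottaviani: the numerical lemma for `d = 4`, `n ≥ 10`. -/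
theorem stmt_2 (n : ℕ) (k u ε : ℤ) (hn : 10 ≤ n)
    (hk0 : 0 ≤ k) (hk : k ≤ ⌈(((n + 4).choose n : ℚ)) / ((n : ℚ) + 1)⌉)
    (hε0 : 0 ≤ ε) (hεn : ε < (n : ℤ))
    (h : (n : ℤ) * u + ε = k * ((n : ℤ) + 1) - ((n + 3).choose n : ℤ)) :
    (n : ℤ) + 1 ≤ k - u - ε := by
  have hN : (10 : ℤ) ≤ (n : ℤ) := by exact_mod_cast hn
  have hc4 : 24 * ((n+4).choose n : ℤ) = ((n:ℤ)+4)*((n:ℤ)+3)*((n:ℤ)+2)*((n:ℤ)+1) := by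
    exact_mod_cast congrArg (Nat.cast : ℕ → ℤ) (c4_eq n)
  have hc3 : 6 * ((n+3).choose n : ℤ) = ((n:ℤ)+3)*((n:ℤ)+2)*((n:ℤ)+1) := by
    exact_mod_cast congrArg (Nat.cast : ℕ → ℤ) (c3_eq n)
  set N : ℤ := (n : ℤ) with hNdef
  set C4 : ℤ := ((n+4).choose n : ℤ) with hC4def
  set C3 : ℤ := ((n+3).choose n : ℤ) with hC3def
  -- bound on k from the ceiling hypothesis
  have hkb : k * (N + 1) ≤ C4 + N := by
    have hceil := Int.ceil_lt_add_one (((n + 4).choose n : ℚ) / ((n : ℚ) + 1))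
    have hkq : (k : ℚ) ≤ (⌈(((n + 4).choose n : ℚ)) / ((n : ℚ) + 1)⌉ : ℚ) := by
      exact_mod_cast hk
    have hpos : (0 : ℚ) < (n : ℚ) + 1 := by positivity
    have hlt : (k : ℚ) * ((n : ℚ) + 1) < ((n + 4).choose n : ℚ) + ((n : ℚ) + 1) := by
      have h1 : (k : ℚ) < ((n + 4).choose n : ℚ) / ((n : ℚ) + 1) + 1 := lt_of_le_of_lt hkq hceil
      have h2 := mul_lt_mul_of_pos_right h1 hpos
      calc (k : ℚ) * ((n : ℚ) + 1) < (((n + 4).choose n : ℚ) / ((n : ℚ) + 1) + 1) * ((n : ℚ) + 1) := h2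
        _ = ((n + 4).choose n : ℚ) + ((n : ℚ) + 1) := by field_simp
    have : k * (N + 1) < C4 + N + 1 := by exact_mod_cast hlt
    omega
  have hεb : ε ≤ N - 1 := by omega
  have key : N * (k - u - ε) = C3 - k - (N - 1) * ε := by linear_combination -h
  have hNpos : (0 : ℤ) < N := by linarith
  have hfac : (0 : ℤ) ≤ 24 * (N+1) * (N-1) := by nlinarith
  have h2 : 24 * (N+1) * (N-1) * ε ≤ 24 * (N+1) * (N-1) * (N-1) :=
    mul_le_mul_of_nonneg_left hεb hfac
  have hpoly : 24*(N+1)*(N*(N+1)) + (24*C4 + 24*N) + 24*(N+1)*(N-1)*(N-1)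
      ≤ 24*(N+1)*C3 := by nlinarith [hc3, hc4, hN, sq_nonneg (N - 10)]
  have hmain : 24*(N+1) * (N*(N+1)) ≤ 24*(N+1) * (C3 - k - (N-1)*ε) := by nlinarith [hkb, h2, hpoly]
  have hfin : N * (N + 1) ≤ C3 - k - (N-1)*ε :=
    le_of_mul_le_mul_left hmain (by linarith)
  rw [← key] at hfin
  exact le_of_mul_le_mul_left hfin hNpos
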